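/- Let X be a real Hilbert space and F : X → ℝ a convex differentiable function whose gradient ∇F is uniformly continuous on every bounded subset of X. Let B be a bounded subset of X. Then for all sequences (x_n), (y_n) in B, if F(x_n) − F(y_n) − ⟨∇F(y_n), x_n − y_n⟩ → 0 as n → ∞, then ∇F(x_n) − ∇F(y_n) → 0 in X. (That is, the restriction of the 1-jet (F, ∇F) to any bounded set satisfies condition (SCW¹).) -/
import Mathlib


open Set Filter Pointwise

local notation "⟪" x ", " y "⟫" => @inner ℝ _ _ x y

/-- Subgradient inequality for a convex differentiable function on a Hilbert space. -/
lemma grad_subgradient_aux {X : Type*} [NormedAddCommGroup X] [InnerProductSpace ℝ X]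
    [CompleteSpace X] (F : X → ℝ) (hconv : ConvexOn ℝ univ F) (hdiff : Differentiable ℝ F)
    (a b : X) : ⟪gradient F a, b - a⟫ ≤ F b - F a := by
  set φ : ℝ → ℝ := fun t => F (a + t • (b - a)) with hφ
  have hline : ∀ t : ℝ, HasDerivAt (fun s : ℝ => a + s • (b - a)) (b - a) t := by
    intro t
    simpa using ((hasDerivAt_id t).smul_const (b - a)).const_add a
  have hgradval : ∀ p : X, ⟪gradient F p, b - a⟫ = fderiv ℝ F p (b - a) := by
    intro p
    rw [gradient]
    exact InnerProductSpace.toDual_symm_apply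
  have hd : HasDerivAt φ ⟪gradient F a, b - a⟫ 0 := by
    have h1 := ((hdiff (a + (0:ℝ) • (b - a))).hasFDerivAt).comp_hasDerivAt 0 (hline 0)
    simp only [zero_smul, add_zero] at h1
    rw [hgradval a]
    exact h1
  have hφconv : ConvexOn ℝ univ φ := by
    have h2 := hconv.comp_affineMap (AffineMap.lineMap a b)
    have heq : F ∘ (AffineMap.lineMap a b : ℝ →ᵃ[ℝ] X) = φ := by
      funext t
      simp only [Function.comp_apply, hφ, AffineMap.lineMap_apply_module]
      congr 1
      module
    have hpre : (AffineMap.lineMap a b : ℝ →ᵃ[ℝ] X) ⁻¹' univ = univ := by simp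
    rw [heq, hpre] at h2
    exact h2
  have key := hφconv.le_slope_of_hasDerivAt (mem_univ (0:ℝ)) (mem_univ (1:ℝ)) one_pos hd
  rw [slope_def_field] at key
  have hφ0 : φ 0 = F a := by simp [hφ]
  have hφ1 : φ 1 = F b := by simp [hφ]
  rw [hφ0, hφ1] at key
  simpa using key

/-- a convex function with uniformly continuous gradient on bounded sets
satisfies condition (SCW¹) on every bounded set. -/
theorem convex_C1ub_jet_satisfies_SCW1
    {X : Type*} [NormedAddCommGroup X] [InnerProductSpace ℝ X] [CompleteSpace X]
    (F : X → ℝ) (hconv : ConvexOn ℝ univ F) (hdiff : Differentiable ℝ F)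
    (hu : ∀ s : Set X, Bornology.IsBounded s → UniformContinuousOn (gradient F) s)
    (B : Set X) (hB : Bornology.IsBounded B)
    (x y : ℕ → X) (hx : ∀ n, x n ∈ B) (hy : ∀ n, y n ∈ B)
    (h : Tendsto (fun n => F (x n) - F (y n) - ⟪gradient F (y n), x n - y n⟫) atTop (nhds 0)) :
    Tendsto (fun n => gradient F (x n) - gradient F (y n)) atTop (nhds 0) := by
  rw [NormedAddCommGroup.tendsto_nhds_zero]
  intro ε hε
  set S : Set X := B + Metric.closedBall (0:X) 1 with hS
  have hSB : Bornology.IsBounded S := hB.add Metric.isBounded_closedBall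
  obtain ⟨δ₀, hδ₀, hδ⟩ := (Metric.uniformContinuousOn_iff).mp (hu S hSB) (ε/2) (by positivity)
  set δ := min (δ₀/2) 1 with hδdef
  have hδpos : 0 < δ := lt_min (by positivity) one_pos
  have hδ1 : δ ≤ 1 := min_le_right _ _
  have hδlt : δ < δ₀ := lt_of_le_of_lt (min_le_left _ _) (by linarith)
  have hmemS : ∀ p ∈ B, ∀ w : X, ‖w‖ ≤ 1 → p + w ∈ S := by
    intro p hp w hw
    exact Set.add_mem_add hp (by simpa [Metric.mem_closedBall, dist_zero_right] using hw)
  -- key pointwise bound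
  have key : ∀ n, ‖gradient F (x n) - gradient F (y n)‖ ≤
      (F (x n) - F (y n) - ⟪gradient F (y n), x n - y n⟫) / δ + ε/2 := by
    intro n
    set g := gradient F (x n) - gradient F (y n) with hg
    set D := F (x n) - F (y n) - ⟪gradient F (y n), x n - y n⟫ with hD
    have hD0 : 0 ≤ D := by
      have := grad_subgradient_aux F hconv hdiff (y n) (x n)
      simp only [hD]; linarith
    by_cases hg0 : g = 0
    · rw [hg0, norm_zero]
      have h1 : 0 ≤ D / δ := div_nonneg hD0 hδpos.le
      linarith
    · have hgn : (0:ℝ) < ‖g‖ := norm_pos_iff.mpr hg0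
      set u : X := -(‖g‖⁻¹ • g) with hu'
      have hunorm : ‖u‖ = 1 := by
        rw [hu', norm_neg, norm_smul, norm_inv, norm_norm]
        field_simp
      set z := x n + δ • u with hz
      have hxS : x n ∈ S := by simpa using hmemS _ (hx n) 0 (by simp)
      have hzS : z ∈ S := by
        refine hmemS _ (hx n) (δ • u) ?_
        rw [norm_smul, hunorm, mul_one, Real.norm_eq_abs, abs_of_pos hδpos]
        exact hδ1
      have hdist : dist z (x n) < δ₀ := by
        rw [hz, dist_eq_norm]
        have : x n + δ • u - x n = δ • u := by abel
        rw [this, norm_smul, hunorm, mul_one, Real.norm_eq_abs, abs_of_pos hδpos]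
        exact hδlt
      have hgradclose : ‖gradient F (x n) - gradient F z‖ < ε/2 := by
        have h3 := hδ z hzS (x n) hxS hdist
        rw [dist_eq_norm, norm_sub_rev] at h3
        exact h3
      have h1 := grad_subgradient_aux F hconv hdiff (y n) z
      have h2 := grad_subgradient_aux F hconv hdiff z (x n)
      -- rewrite inner products
      have e1 : ⟪gradient F (y n), z - y n⟫
          = ⟪gradient F (y n), x n - y n⟫ + δ * ⟪gradient F (y n), u⟫ := by
        have hzy : z - y n = (x n - y n) + δ • u := by rw [hz]; abel
        rw [hzy, inner_add_right, real_inner_smul_right]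
      have e2 : ⟪gradient F z, x n - z⟫ = -(δ * ⟪gradient F z, u⟫) := by
        have hxz : x n - z = -(δ • u) := by rw [hz]; abel
        rw [hxz, inner_neg_right, real_inner_smul_right]
      have e3 : ⟪gradient F (y n), u⟫ - ⟪gradient F (x n), u⟫ = ‖g‖ := by
        rw [← inner_sub_left]
        have hyx : gradient F (y n) - gradient F (x n) = -g := by rw [hg]; abel
        rw [hyx, hu', inner_neg_neg, real_inner_smul_right, real_inner_self_eq_norm_sq, sq]
        field_simp
      have e4 : -(ε/2) ≤ ⟪gradient F (x n), u⟫ - ⟪gradient F z, u⟫ := by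
        rw [← inner_sub_left]
        have h5 := abs_real_inner_le_norm (gradient F (x n) - gradient F z) u
        rw [hunorm, mul_one] at h5
        have h6 := neg_abs_le (⟪gradient F (x n) - gradient F z, u⟫)
        linarith
      rw [e1] at h1
      rw [e2] at h2
      -- combine: δ * (‖g‖ - ε/2) ≤ D
      have h7 : δ * (⟪gradient F (y n), u⟫ - ⟪gradient F z, u⟫) ≤ D := by
        simp only [hD]; nlinarith
      have h8 : ‖g‖ - ε/2 ≤ ⟪gradient F (y n), u⟫ - ⟪gradient F z, u⟫ := by linarith
      have h9 : δ * (‖g‖ - ε/2) ≤ D :=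
        le_trans (mul_le_mul_of_nonneg_left h8 hδpos.le) h7
      have h10 : ‖g‖ - ε/2 ≤ D / δ := (le_div_iff₀ hδpos).mpr (by nlinarith)
      linarith
  -- conclude
  have hev : ∀ᶠ n in atTop,
      |F (x n) - F (y n) - ⟪gradient F (y n), x n - y n⟫| < δ * (ε/2) := by
    have h11 := h.eventually (Metric.ball_mem_nhds (0:ℝ) (by positivity : (0:ℝ) < δ * (ε/2)))
    filter_upwards [h11] with n hn
    simpa [Real.dist_eq] using hn
  filter_upwards [hev] with n hn
  have hk := key n
  set D := F (x n) - F (y n) - ⟪gradient F (y n), x n - y n⟫ with hD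
  have hDlt : D < δ * (ε/2) := lt_of_le_of_lt (le_abs_self D) hn
  have : D / δ < ε/2 := (div_lt_iff₀ hδpos).mpr (by nlinarith)
  calc ‖gradient F (x n) - gradient F (y n)‖ ≤ D / δ + ε/2 := hk
    _ < ε := by linarith
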